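/- For natural numbers m > n ≥ 2, the Grassmannian angles satisfy α_{m+1,n+1} < α_{m,n} (strict inequality), and consequently α_{m,n+1} < α_{m,n}. -/

import Mathlib

open scoped RealInnerProductSpace
abbrev E (n : ℕ) := EuclideanSpace ℝ (Fin n)
noncomputable def coh {n : ℕ} (X : Set (E n)) : ℝ :=
  sSup {r : ℝ | ∃ x ∈ X, ∃ y ∈ X, x ≠ y ∧ r = |⟪x, y⟫|}
def IsUnitSet {n : ℕ} (X : Set (E n)) : Prop := ∀ x ∈ X, ‖x‖ = 1
def Isolated {n : ℕ} (X : Set (E n)) (x : E n) : Prop :=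
  ∀ y ∈ X, y ≠ x → |⟪x, y⟫| < coh X
def Isolable {n : ℕ} (X : Set (E n)) (x : E n) : Prop :=
  ∀ ε > 0, ∃ x' : E n, ‖x'‖ = 1 ∧ ‖x - x'‖ < ε ∧ ∀ y ∈ X, y ≠ x → |⟪x', y⟫| < coh X
def Grassmannian {n : ℕ} (m : ℕ) (X : Set (E n)) : Prop :=
  IsUnitSet X ∧ X.Finite ∧ X.ncard = m ∧
    ∀ Y : Set (E n), IsUnitSet Y → Y.Finite → Y.ncard = m → coh X ≤ coh Y
noncomputable def grassAngle (m n : ℕ) : ℝ :=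
  sInf {r : ℝ | ∃ X : Set (E n), IsUnitSet X ∧ X.Finite ∧ X.ncard = m ∧ coh X = r}

/-! ### Auxiliary lemmas -/

lemma coh_nonneg {n : ℕ} (X : Set (E n)) : 0 ≤ coh X := by
  apply Real.sSup_nonneg
  rintro r ⟨x, -, y, -, -, rfl⟩
  exact abs_nonneg _

lemma coh_le {n : ℕ} {X : Set (E n)} {a : ℝ} (h0 : 0 ≤ a)
    (h : ∀ x ∈ X, ∀ y ∈ X, x ≠ y → |⟪x, y⟫| ≤ a) : coh X ≤ a := by
  apply Real.sSup_le _ h0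
  rintro r ⟨x, hx, y, hy, hxy, rfl⟩
  exact h x hx y hy hxy

lemma abs_inner_le_coh {n : ℕ} {X : Set (E n)} (hX : IsUnitSet X) {x y : E n}
    (hx : x ∈ X) (hy : y ∈ X) (hxy : x ≠ y) : |⟪x, y⟫| ≤ coh X := by
  refine le_csSup ⟨1, ?_⟩ ⟨x, hx, y, hy, hxy, rfl⟩
  rintro r ⟨a, ha, b, hb, hab, rfl⟩
  calc |⟪a, b⟫| ≤ ‖a‖ * ‖b‖ := abs_real_inner_le_norm a b
    _ = 1 := by rw [hX a ha, hX b hb, one_mul]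

lemma coh_le_one {n : ℕ} {X : Set (E n)} (hX : IsUnitSet X) : coh X ≤ 1 := by
  apply coh_le zero_le_one
  intro x hx y hy _
  calc |⟪x, y⟫| ≤ ‖x‖ * ‖y‖ := abs_real_inner_le_norm x y
    _ = 1 := by rw [hX x hx, hX y hy, one_mul]

lemma exists_enum {n m : ℕ} {X : Set (E n)} (hfin : X.Finite) (hcard : X.ncard = m) :
    ∃ x : Fin m → E n, Function.Injective x ∧ Set.range x = X := by
  have hfs : hfin.toFinset.card = m := by
    rw [← Set.ncard_eq_toFinset_card _ hfin, hcard]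
  let e := hfin.toFinset.equivFinOfCardEq hfs
  refine ⟨fun i => (e.symm i : E n), ?_, ?_⟩
  · intro i j h
    exact e.symm.injective (Subtype.ext h)
  · ext z
    constructor
    · rintro ⟨i, rfl⟩
      exact hfin.mem_toFinset.mp (e.symm i).2
    · intro hz
      exact ⟨e ⟨z, hfin.mem_toFinset.mpr hz⟩, by simp⟩

lemma one_le_mul_coh {n m : ℕ} (hmn : n < m) {X : Set (E n)} (hX : IsUnitSet X)
    (hfin : X.Finite) (hcard : X.ncard = m) : 1 ≤ (m : ℝ) * coh X := by
  obtain ⟨x, hxinj, hxr⟩ := exists_enum hfin hcard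
  have hxmem : ∀ i, x i ∈ X := fun i => hxr ▸ ⟨i, rfl⟩
  have hnli : ¬ LinearIndependent ℝ x := by
    intro h
    have h2 := h.fintype_card_le_finrank
    rw [finrank_euclideanSpace_fin, Fintype.card_fin] at h2
    omega
  obtain ⟨g, hsum, i, hgi⟩ := Fintype.not_linearIndependent_iff.mp hnli
  obtain ⟨i₀, -, hmax⟩ := Finset.exists_max_image Finset.univ (fun j => |g j|)
    ⟨i, Finset.mem_univ i⟩
  have hpos : 0 < |g i₀| :=
    lt_of_lt_of_le (abs_pos.mpr hgi) (hmax i (Finset.mem_univ i))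
  have h0 : ⟪x i₀, ∑ j, g j • x j⟫ = 0 := by rw [hsum, inner_zero_right]
  rw [inner_sum] at h0
  simp_rw [real_inner_smul_right] at h0
  rw [← Finset.add_sum_erase Finset.univ _ (Finset.mem_univ i₀)] at h0
  have hself : ⟪x i₀, x i₀⟫ = 1 := by
    rw [real_inner_self_eq_norm_sq, hX _ (hxmem i₀)]; norm_num
  rw [hself, mul_one] at h0
  have hgeq : g i₀ = - ∑ j ∈ Finset.univ.erase i₀, g j * ⟪x i₀, x j⟫ := by linarith
  have habs : |g i₀| = |∑ j ∈ Finset.univ.erase i₀, g j * ⟪x i₀, x j⟫| := by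
    rw [hgeq]; exact abs_neg _
  have hbound : |g i₀| ≤ (m : ℝ) * (|g i₀| * coh X) := by
    calc |g i₀| = |∑ j ∈ Finset.univ.erase i₀, g j * ⟪x i₀, x j⟫| := habs
      _ ≤ ∑ j ∈ Finset.univ.erase i₀, |g j * ⟪x i₀, x j⟫| :=
          Finset.abs_sum_le_sum_abs _ _
      _ ≤ ∑ j ∈ Finset.univ.erase i₀, |g i₀| * coh X := by
          apply Finset.sum_le_sum
          intro j hj
          rw [abs_mul]
          have hne : x i₀ ≠ x j := fun h =>
            (Finset.ne_of_mem_erase hj) (hxinj h).symm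
          exact mul_le_mul (hmax j (Finset.mem_univ j))
            (abs_inner_le_coh hX (hxmem i₀) (hxmem j) hne) (abs_nonneg _)
            (abs_nonneg _)
      _ ≤ ∑ _j ∈ (Finset.univ : Finset (Fin m)), |g i₀| * coh X := by
          apply Finset.sum_le_sum_of_subset_of_nonneg (Finset.erase_subset _ _)
          intro j _ _
          exact mul_nonneg (abs_nonneg _) (coh_nonneg X)
      _ = (m : ℝ) * (|g i₀| * coh X) := by
          rw [Finset.sum_const, Finset.card_univ, Fintype.card_fin, nsmul_eq_mul]
  have := (le_mul_iff_one_le_left hpos).mp (by linarith [hbound] : |g i₀| ≤ ((m : ℝ) * coh X) * |g i₀|)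
  linarith

lemma inner_eqE {n : ℕ} (x y : E n) : ⟪x, y⟫ = ∑ i, x i * y i := by
  simp [PiLp.inner_apply, RCLike.inner_apply, conj_trivial]
  exact Finset.sum_congr rfl fun i _ => mul_comm _ _

noncomputable def liftE {n : ℕ} (v : E n) (a u : ℝ) : E (n+1) :=
  WithLp.toLp 2 (Fin.snoc (a • v.ofLp) u : Fin (n+1) → ℝ)

lemma inner_liftE {n : ℕ} (v w : E n) (a b u r : ℝ) :
    ⟪liftE v a u, liftE w b r⟫ = a * b * ⟪v, w⟫ + u * r := by
  rw [inner_eqE, inner_eqE, Fin.sum_univ_castSucc]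
  simp only [liftE, WithLp.ofLp_toLp, Pi.smul_apply, Fin.snoc_castSucc, Fin.snoc_last, PiLp.smul_apply, smul_eq_mul]
  rw [Finset.mul_sum]
  congr 1
  exact Finset.sum_congr rfl fun i _ => by ring

lemma norm_eq_one_of_inner {k : ℕ} {z : E k} (h : ⟪z, z⟫ = 1) : ‖z‖ = 1 := by
  have := real_inner_self_eq_norm_sq z
  rw [h] at this
  nlinarith [norm_nonneg z]

set_option maxHeartbeats 1000000 in
lemma construction {n m : ℕ} (hmn : n < m) {X : Set (E n)} (hX : IsUnitSet X)
    (hfin : X.Finite) (hcard : X.ncard = m) :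
    ∃ Y Z : Set (E (n+1)),
      IsUnitSet Y ∧ Y.Finite ∧ Y.ncard = m + 1 ∧
        coh Y ≤ coh X - (1/(4*m))^(2*m+1) ∧
      IsUnitSet Z ∧ Z.Finite ∧ Z.ncard = m ∧
        coh Z ≤ coh X - (1/(4*m))^(2*m+1) := by
  have hm0 : 0 < m := by omega
  have hm0' : (0:ℝ) < m := by exact_mod_cast hm0
  obtain ⟨x, hxinj, hxr⟩ := exists_enum hfin hcard
  have hxmem : ∀ i, x i ∈ X := fun i => hxr ▸ ⟨i, rfl⟩
  set β := coh X with hβdef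
  set c : ℝ := 1/(4*m) with hcdef
  have hc0 : 0 < c := by positivity
  have hc14 : c ≤ 1/4 := by
    rw [hcdef, div_le_div_iff₀ (by positivity) (by norm_num)]
    have : (1:ℝ) ≤ m := by exact_mod_cast hm0
    linarith
  have hc1 : c ≤ 1 := le_trans hc14 (by norm_num)
  have hβ4c : 4*c ≤ β := by
    have h1 := one_le_mul_coh hmn hX hfin hcard
    have h2 : (4:ℝ)*c = 1/m := by rw [hcdef]; field_simp
    rw [h2, div_le_iff₀ hm0']
    linarith
  have hβ1 : β ≤ 1 := coh_le_one hX
  set δ : ℝ := c^(2*m+1) with hδdef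
  have hδ0 : 0 < δ := pow_pos hc0 _
  have hδc : δ ≤ c := by
    calc δ = c^(2*m+1) := rfl
      _ ≤ c^1 := pow_le_pow_of_le_one hc0.le hc1 (by omega)
      _ = c := pow_one c
  have hgap : 3*c ≤ β - δ := by linarith
  have hgap0 : 0 < β - δ := by linarith
  set u : Fin m → ℝ := fun i => c^((i:ℕ)+1) with hudef
  have hu0 : ∀ i, 0 < u i := fun i => pow_pos hc0 _
  have huc : ∀ i, u i ≤ c := by
    intro i
    calc u i = c^((i:ℕ)+1) := rfl
      _ ≤ c^1 := pow_le_pow_of_le_one hc0.le hc1 (by omega)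
      _ = c := pow_one c
  have hu1 : ∀ i, u i ^2 ≤ 1 := fun i => by nlinarith [huc i, hu0 i, hc1]
  set a : Fin m → ℝ := fun i => Real.sqrt (1 - u i^2) with hadef
  have ha0 : ∀ i, 0 ≤ a i := fun i => Real.sqrt_nonneg _
  have hasq : ∀ i, a i^2 = 1 - u i^2 := fun i => Real.sq_sqrt (by linarith [hu1 i])
  have ha1 : ∀ i, a i ≤ 1 := fun i => by nlinarith [hasq i, ha0 i, sq_nonneg (u i)]
  have haU : ∀ i, a i ≤ 1 - u i^2/2 := by
    intro i
    nlinarith [hasq i, ha0 i, hu1 i, sq_nonneg (u i * u i), sq_nonneg (u i)]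
  set y : Fin m → E (n+1) := fun i => liftE (x i) (a i) (u i) with hydef
  set ee : E (n+1) := liftE 0 0 1 with heedef
  have hyy : ∀ i j, ⟪y i, y j⟫ = a i * a j * ⟪x i, x j⟫ + u i * u j := by
    intro i j
    rw [hydef]
    exact inner_liftE _ _ _ _ _ _
  have hye : ∀ i, ⟪y i, ee⟫ = u i := by
    intro i
    rw [hydef, heedef, inner_liftE]
    simp
  have heenorm : ‖ee‖ = 1 := by
    apply norm_eq_one_of_inner
    rw [heedef, inner_liftE]
    simp
  have hynorm : ∀ i, ‖y i‖ = 1 := by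
    intro i
    apply norm_eq_one_of_inner
    rw [hyy i i]
    have hxi : ⟪x i, x i⟫ = 1 := by
      rw [real_inner_self_eq_norm_sq, hX _ (hxmem i)]; norm_num
    rw [hxi]
    nlinarith [hasq i]
  have hxij : ∀ i j, i ≠ j → |⟪x i, x j⟫| ≤ β := fun i j hij =>
    abs_inner_le_coh hX (hxmem i) (hxmem j) (fun h => hij (hxinj h))
  have key : ∀ i j : Fin m, (i:ℕ) < (j:ℕ) → |⟪y i, y j⟫| ≤ β - δ := by
    intro i j hij
    have hne : i ≠ j := fun h => by rw [h] at hij; omega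
    have huj : u j ≤ c * u i := by
      calc u j = c^((j:ℕ)+1) := rfl
        _ ≤ c^((i:ℕ)+2) := pow_le_pow_of_le_one hc0.le hc1 (by omega)
        _ = c * c^((i:ℕ)+1) := by ring
        _ = c * u i := rfl
    have hui2 : c^(2*m) ≤ u i^2 := by
      have hile : (i:ℕ) + 1 ≤ m := i.2
      calc c^(2*m) ≤ c^(2*((i:ℕ)+1)) :=
            pow_le_pow_of_le_one hc0.le hc1 (by omega)
        _ = (c^((i:ℕ)+1))^2 := by rw [← pow_mul, Nat.mul_comm]
        _ = u i^2 := rfl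
    have hδle : δ ≤ c * u i^2 := by
      have h1 : δ = c * c^(2*m) := by rw [hδdef]; ring
      rw [h1]
      exact mul_le_mul_of_nonneg_left hui2 hc0.le
    have f1 : u i^2 * (4*c) ≤ u i^2 * β := mul_le_mul_of_nonneg_left hβ4c (sq_nonneg _)
    have f2 : u i * u j ≤ u i * (c * u i) := mul_le_mul_of_nonneg_left huj (hu0 i).le
    rw [hyy i j]
    have hβ0 : 0 ≤ β := by linarith
    calc |a i * a j * ⟪x i, x j⟫ + u i * u j|
        ≤ |a i * a j * ⟪x i, x j⟫| + |u i * u j| := abs_add_le _ _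
      _ = a i * a j * |⟪x i, x j⟫| + u i * u j := by
          rw [abs_mul, abs_of_nonneg (mul_nonneg (ha0 i) (ha0 j)),
            abs_of_nonneg (mul_nonneg (hu0 i).le (hu0 j).le)]
      _ ≤ a i * |⟪x i, x j⟫| + u i * u j := by
          have := mul_le_mul_of_nonneg_right
            (mul_le_of_le_one_right (ha0 i) (ha1 j)) (abs_nonneg ⟪x i, x j⟫)
          linarith
      _ ≤ a i * β + u i * u j := by
          have := mul_le_mul_of_nonneg_left (hxij i j hne) (ha0 i)
          linarith
      _ ≤ (1 - u i^2/2) * β + u i * u j := by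
          have := mul_le_mul_of_nonneg_right (haU i) hβ0
          linarith
      _ ≤ β - δ := by linarith [f1, f2, hδle]
  have hkey' : ∀ i j, i ≠ j → |⟪y i, y j⟫| ≤ β - δ := by
    intro i j hij
    rcases lt_trichotomy (i:ℕ) (j:ℕ) with h | h | h
    · exact key i j h
    · exact absurd (Fin.ext h) hij
    · rw [real_inner_comm]
      exact key j i h
  have hyinj : Function.Injective y := by
    intro i j hij_eq
    by_contra hne
    have h1 : ⟪y i, y j⟫ = 1 := by
      rw [hij_eq, real_inner_self_eq_norm_sq, hynorm j]; norm_num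
    have h2 := hkey' i j hne
    rw [h1, abs_one] at h2
    linarith
  have heenotin : ee ∉ Set.range y := by
    rintro ⟨i, hi⟩
    have h1 : ⟪y i, ee⟫ = 1 := by
      rw [← hi, real_inner_self_eq_norm_sq, hynorm i]; norm_num
    rw [hye i] at h1
    have := huc i
    linarith
  have hZfin : (Set.range y).Finite := Set.finite_range y
  have hZcard : (Set.range y).ncard = m := by
    rw [← Set.image_univ, Set.ncard_image_of_injective _ hyinj, Set.ncard_univ,
      Nat.card_eq_fintype_card, Fintype.card_fin]
  have hZunit : IsUnitSet (Set.range y) := by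
    rintro z ⟨i, rfl⟩; exact hynorm i
  have hZcoh : coh (Set.range y) ≤ β - δ := by
    apply coh_le hgap0.le
    rintro z1 ⟨i, rfl⟩ z2 ⟨j, rfl⟩ hne
    exact hkey' i j (fun h => hne (by rw [h]))
  have hYfin : (insert ee (Set.range y)).Finite := hZfin.insert ee
  have hYcard : (insert ee (Set.range y)).ncard = m + 1 := by
    rw [Set.ncard_insert_of_notMem heenotin hZfin, hZcard]
  have hYunit : IsUnitSet (insert ee (Set.range y)) := by
    rintro z hz
    rcases hz with rfl | ⟨i, rfl⟩
    · exact heenorm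
    · exact hynorm i
  have hYcoh : coh (insert ee (Set.range y)) ≤ β - δ := by
    apply coh_le hgap0.le
    rintro z1 hz1 z2 hz2 hne
    rcases hz1 with rfl | ⟨i, rfl⟩ <;> rcases hz2 with rfl | ⟨j, rfl⟩
    · exact absurd rfl hne
    · rw [real_inner_comm, hye j, abs_of_pos (hu0 j)]
      linarith [huc j, hgap, hc0]
    · rw [hye i, abs_of_pos (hu0 i)]
      linarith [huc i, hgap, hc0]
    · exact hkey' i j (fun h => hne (by rw [h]))
  exact ⟨insert ee (Set.range y), Set.range y, hYunit, hYfin, hYcard, hYcoh,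
    hZunit, hZfin, hZcard, hZcoh⟩

lemma exists_base (m : ℕ) {n : ℕ} (hn : 2 ≤ n) :
    ∃ X : Set (E n), IsUnitSet X ∧ X.Finite ∧ X.ncard = m := by
  set j0 : Fin n := ⟨0, by omega⟩ with hj0
  set j1 : Fin n := ⟨1, by omega⟩ with hj1
  have hj : j0 ≠ j1 := by
    intro h
    rw [Fin.ext_iff] at h
    simp [hj0, hj1] at h
  set t : Fin m → ℝ := fun k => ((k:ℕ)+1)/((m:ℝ)+1) with htdef
  have hm0' : (0:ℝ) ≤ m := Nat.cast_nonneg m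
  have ht0 : ∀ k, 0 < t k := by intro k; positivity
  have ht1 : ∀ k, t k < 1 := by
    intro k
    rw [htdef]
    rw [div_lt_one (by positivity)]
    have : ((k:ℕ):ℝ) < m := by exact_mod_cast k.2
    linarith
  have htinj : Function.Injective t := by
    intro k l h
    rw [htdef, div_eq_div_iff (by positivity) (by positivity)] at h
    have : ((k:ℕ):ℝ) = ((l:ℕ):ℝ) := by nlinarith
    exact Fin.ext (by exact_mod_cast this)
  set g : Fin m → E n := fun k =>
    EuclideanSpace.single j0 (Real.sqrt (1 - t k^2)) + EuclideanSpace.single j1 (t k)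
    with hgdef
  have hg1 : ∀ k, g k j1 = t k := by
    intro k
    rw [hgdef]
    simp [EuclideanSpace.single_apply, hj, Ne.symm hj]
  have hginj : Function.Injective g := by
    intro k l h
    apply htinj
    rw [← hg1 k, ← hg1 l, h]
  have hnorm : ∀ k, ‖g k‖ = 1 := by
    intro k
    apply norm_eq_one_of_inner
    have hsq : Real.sqrt (1 - t k^2)^2 = 1 - t k^2 :=
      Real.sq_sqrt (by nlinarith [ht0 k, ht1 k])
    rw [hgdef]
    simp only [inner_add_left, inner_add_right, EuclideanSpace.inner_single_left,
      conj_trivial, EuclideanSpace.single_apply]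
    simp [hj, Ne.symm hj]
    nlinarith [hsq]
  refine ⟨Set.range g, ?_, Set.finite_range g, ?_⟩
  · rintro z ⟨k, rfl⟩; exact hnorm k
  · rw [← Set.image_univ, Set.ncard_image_of_injective _ hginj, Set.ncard_univ,
      Nat.card_eq_fintype_card, Fintype.card_fin]

theorem grassAngle_strict_mono_dim {m n : ℕ} (hn : 2 ≤ n) (hmn : n < m) :
    grassAngle (m + 1) (n + 1) < grassAngle m n ∧
    grassAngle m (n + 1) < grassAngle m n := by
  have hm0' : (0:ℝ) < m := by
    have : 0 < m := by omega
    exact_mod_cast this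
  have hSne : {r : ℝ | ∃ X : Set (E n),
      IsUnitSet X ∧ X.Finite ∧ X.ncard = m ∧ coh X = r}.Nonempty := by
    obtain ⟨X, h1, h2, h3⟩ := exists_base m hn
    exact ⟨coh X, X, h1, h2, h3, rfl⟩
  have hbdd : ∀ (M N : ℕ), BddBelow {r : ℝ | ∃ X : Set (E N),
      IsUnitSet X ∧ X.Finite ∧ X.ncard = M ∧ coh X = r} := by
    intro M N
    refine ⟨0, ?_⟩
    rintro r ⟨X, -, -, -, rfl⟩
    exact coh_nonneg X
  have hδ0 : 0 < (1/(4*(m:ℝ)))^(2*m+1) := by positivity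
  have hmain : ∀ r ∈ {r : ℝ | ∃ X : Set (E n),
      IsUnitSet X ∧ X.Finite ∧ X.ncard = m ∧ coh X = r},
      grassAngle (m+1) (n+1) + (1/(4*(m:ℝ)))^(2*m+1) ≤ r ∧
      grassAngle m (n+1) + (1/(4*(m:ℝ)))^(2*m+1) ≤ r := by
    rintro r ⟨X, hX, hfin, hcard, rfl⟩
    obtain ⟨Y, Z, hYu, hYf, hYc, hYcoh, hZu, hZf, hZc, hZcoh⟩ :=
      construction hmn hX hfin hcard
    constructor
    · have h1 : grassAngle (m+1) (n+1) ≤ coh Y :=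
        csInf_le (hbdd (m+1) (n+1)) ⟨Y, hYu, hYf, hYc, rfl⟩
      linarith
    · have h1 : grassAngle m (n+1) ≤ coh Z :=
        csInf_le (hbdd m (n+1)) ⟨Z, hZu, hZf, hZc, rfl⟩
      linarith
  have hend1 : grassAngle (m+1) (n+1) + (1/(4*(m:ℝ)))^(2*m+1) ≤ grassAngle m n :=
    le_csInf hSne (fun r hr => (hmain r hr).1)
  have hend2 : grassAngle m (n+1) + (1/(4*(m:ℝ)))^(2*m+1) ≤ grassAngle m n :=
    le_csInf hSne (fun r hr => (hmain r hr).2)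
  constructor <;> linarith
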